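/- Iterated commutator identity for the Gross–Pitaevskii equation: Let d ≥ 1, ϑ ∈ ℝ, V ∈ C²(ℝ^d, ℝ), and let v : ℝ^d → ℂ be of class C². Define F₂(v) = − i (V + ϑ |v|²) v, F₂′(v)w = − i (V w + 2ϑ |v|² w + ϑ v² w̄), G₁(v) = − ΔV v − 2 ∇V·∇v − 2ϑ (Δv̄ v² + (∇v·∇v) v̄ + 2 (∇v·∇v̄) v), and for a C² function w define G₁′(v)w = − ΔV w − 2 ∇V·∇w − 2ϑ ( 2 v w Δv̄ + v² Δw̄ + (∇v·∇v) w̄ + 2 (∇v·∇w) v̄ + 2 (∇v·∇v̄) w + 2 (∇w·∇v̄) v + 2 (∇v·∇w̄) v ). Then pointwise on ℝ^d: F₂′(v) G₁(v) − G₁′(v) F₂(v) = − 2 i ( |∇V|² − 2ϑ ( |v|² ΔV + ϑ ( |v|² (2 Re(v̄ Δv) + 3 ∇v̄·∇v) + Re(v̄² ∇v·∇v) ) ) ) v. -/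

import Mathlib

open Complex

/-- `j`-th partial derivative of a complex-valued function on `ℝ^d`. -/
noncomputable def pdC {d : ℕ} (j : Fin d) (w : (Fin d → ℝ) → ℂ) (x : Fin d → ℝ) : ℂ :=
  fderiv ℝ w x (Pi.single j 1)

/-- Laplacian of a complex-valued function on `ℝ^d`. -/
noncomputable def lapC {d : ℕ} (w : (Fin d → ℝ) → ℂ) (x : Fin d → ℝ) : ℂ :=
  ∑ j, pdC j (fun y => pdC j w y) x

/-- Gradient dot product `∇w·∇z` of complex-valued functions on `ℝ^d`. -/
noncomputable def gdotC {d : ℕ} (w z : (Fin d → ℝ) → ℂ) (x : Fin d → ℝ) : ℂ :=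
  ∑ j, pdC j w x * pdC j z x

/-- `j`-th partial derivative of a real-valued function on `ℝ^d`. -/
noncomputable def pdR {d : ℕ} (j : Fin d) (w : (Fin d → ℝ) → ℝ) (x : Fin d → ℝ) : ℝ :=
  fderiv ℝ w x (Pi.single j 1)

/-- Laplacian of a real-valued function on `ℝ^d`. -/
noncomputable def lapR {d : ℕ} (w : (Fin d → ℝ) → ℝ) (x : Fin d → ℝ) : ℝ :=
  ∑ j, pdR j (fun y => pdR j w y) x

/-- Gradient dot product `∇w·∇z` of real-valued functions on `ℝ^d`. -/
noncomputable def gdotR {d : ℕ} (w z : (Fin d → ℝ) → ℝ) (x : Fin d → ℝ) : ℝ :=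
  ∑ j, pdR j w x * pdR j z x

/-- `F₂(v) = −i (V + ϑ|v|²) v` for the Gross–Pitaevskii equation. -/
noncomputable def F2gp {d : ℕ} (V : (Fin d → ℝ) → ℝ) (ϑ : ℝ)
    (v : (Fin d → ℝ) → ℂ) : (Fin d → ℝ) → ℂ :=
  fun y => - Complex.I * ((V y : ℂ) + (ϑ : ℂ) * (Complex.normSq (v y) : ℂ)) * v y

/-- `F₂′(v)w = −i (V w + 2ϑ|v|² w + ϑ v² w̄)`. -/
noncomputable def F2gpD {d : ℕ} (V : (Fin d → ℝ) → ℝ) (ϑ : ℝ)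
    (v w : (Fin d → ℝ) → ℂ) : (Fin d → ℝ) → ℂ :=
  fun y => - Complex.I * ((V y : ℂ) * w y
    + 2 * (ϑ : ℂ) * (Complex.normSq (v y) : ℂ) * w y
    + (ϑ : ℂ) * (v y) ^ 2 * (starRingEnd ℂ) (w y))

/-- `G₁(v) = −ΔV v − 2 ∇V·∇v − 2ϑ (Δv̄ v² + (∇v·∇v) v̄ + 2 (∇v·∇v̄) v)`. -/
noncomputable def G1gp {d : ℕ} (V : (Fin d → ℝ) → ℝ) (ϑ : ℝ)
    (v : (Fin d → ℝ) → ℂ) : (Fin d → ℝ) → ℂ :=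
  fun y => - (lapR V y : ℂ) * v y - 2 * gdotC (fun z => (V z : ℂ)) v y
    - 2 * (ϑ : ℂ) * (lapC (fun z => (starRingEnd ℂ) (v z)) y * (v y) ^ 2
        + gdotC v v y * (starRingEnd ℂ) (v y)
        + 2 * gdotC v (fun z => (starRingEnd ℂ) (v z)) y * v y)

/-- `G₁′(v)w = −ΔV w − 2 ∇V·∇w − 2ϑ (2 v w Δv̄ + v² Δw̄ + (∇v·∇v) w̄ + 2 (∇v·∇w) v̄
  + 2 (∇v·∇v̄) w + 2 (∇w·∇v̄) v + 2 (∇v·∇w̄) v)`. -/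
noncomputable def G1gpD {d : ℕ} (V : (Fin d → ℝ) → ℝ) (ϑ : ℝ)
    (v w : (Fin d → ℝ) → ℂ) : (Fin d → ℝ) → ℂ :=
  fun y => - (lapR V y : ℂ) * w y - 2 * gdotC (fun z => (V z : ℂ)) w y
    - 2 * (ϑ : ℂ) * (2 * v y * w y * lapC (fun z => (starRingEnd ℂ) (v z)) y
        + (v y) ^ 2 * lapC (fun z => (starRingEnd ℂ) (w z)) y
        + gdotC v v y * (starRingEnd ℂ) (w y)
        + 2 * gdotC v w y * (starRingEnd ℂ) (v y)
        + 2 * gdotC v (fun z => (starRingEnd ℂ) (v z)) y * w y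
        + 2 * gdotC w (fun z => (starRingEnd ℂ) (v z)) y * v y
        + 2 * gdotC v (fun z => (starRingEnd ℂ) (w z)) y * v y)

section helpers
variable {d : ℕ} {j : Fin d} {f g : (Fin d → ℝ) → ℂ} {x : Fin d → ℝ}

lemma pdC_mul (hf : DifferentiableAt ℝ f x) (hg : DifferentiableAt ℝ g x) :
    pdC j (fun y => f y * g y) x = pdC j f x * g x + f x * pdC j g x := by
  simp [pdC, fderiv_fun_mul hf hg]; ring

lemma pdC_add (hf : DifferentiableAt ℝ f x) (hg : DifferentiableAt ℝ g x) :
    pdC j (fun y => f y + g y) x = pdC j f x + pdC j g x := by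
  simp [pdC, fderiv_fun_add hf hg]

lemma pdC_const_mul (c : ℂ) (hf : DifferentiableAt ℝ f x) :
    pdC j (fun y => c * f y) x = c * pdC j f x := by
  simp [pdC, fderiv_const_mul hf]

lemma pdC_conj (hf : DifferentiableAt ℝ f x) :
    pdC j (fun y => (starRingEnd ℂ) (f y)) x = (starRingEnd ℂ) (pdC j f x) := by
  have h : HasFDerivAt (fun y => (starRingEnd ℂ) (f y))
      ((Complex.conjCLE.toContinuousLinearMap).comp (fderiv ℝ f x)) x :=
    (Complex.conjCLE.toContinuousLinearMap.hasFDerivAt).comp x hf.hasFDerivAt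
  rw [pdC, h.fderiv]
  rfl

lemma pdC_ofReal {V : (Fin d → ℝ) → ℝ} (hf : DifferentiableAt ℝ V x) :
    pdC j (fun y => ((V y : ℝ) : ℂ)) x = ((pdR j V x : ℝ) : ℂ) := by
  have h : HasFDerivAt (fun y => ((V y : ℝ) : ℂ))
      (Complex.ofRealCLM.comp (fderiv ℝ V x)) x :=
    (Complex.ofRealCLM.hasFDerivAt).comp x hf.hasFDerivAt
  rw [pdC, pdR, h.fderiv]
  rfl

lemma diff_conj (hf : Differentiable ℝ f) :
    Differentiable ℝ (fun y => (starRingEnd ℂ) (f y)) :=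
  fun y => (Complex.conjCLE.toContinuousLinearMap.differentiableAt).comp y (hf y)

lemma contDiff_conj (hf : ContDiff ℝ 2 f) :
    ContDiff ℝ 2 (fun y => (starRingEnd ℂ) (f y)) :=
  Complex.conjCLE.toContinuousLinearMap.contDiff.comp hf

lemma diff_pdC (hf : ContDiff ℝ 2 f) (j : Fin d) :
    Differentiable ℝ (fun y => pdC j f y) := by
  have h := (hf.fderiv_right (m := 1) (by norm_num)).clm_apply
    (contDiff_const (c := Pi.single j (1 : ℝ)))
  exact h.differentiable one_ne_zero

lemma diff_pdR {V : (Fin d → ℝ) → ℝ} (hf : ContDiff ℝ 2 V) (j : Fin d) :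
    Differentiable ℝ (fun y => pdR j V y) := by
  have h := (hf.fderiv_right (m := 1) (by norm_num)).clm_apply
    (contDiff_const (c := Pi.single j (1 : ℝ)))
  exact h.differentiable one_ne_zero

end helpers


section gp
variable {d : ℕ} {V : (Fin d → ℝ) → ℝ} {ϑ : ℝ} {v : (Fin d → ℝ) → ℂ}

/-- auxiliary: the multiplier `V + ϑ v v̄`. -/
noncomputable def Pgp {d : ℕ} (V : (Fin d → ℝ) → ℝ) (ϑ : ℝ) (v : (Fin d → ℝ) → ℂ) :
    (Fin d → ℝ) → ℂ :=
  fun y => ((V y : ℝ) : ℂ) + (ϑ : ℂ) * (v y * (starRingEnd ℂ) (v y))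

/-- auxiliary: first partial of `F2gp`. -/
noncomputable def Ejgp {d : ℕ} (V : (Fin d → ℝ) → ℝ) (ϑ : ℝ) (v : (Fin d → ℝ) → ℂ)
    (j : Fin d) (y : Fin d → ℝ) : ℂ :=
  -Complex.I * ((((pdR j V y : ℝ) : ℂ)
      + (ϑ : ℂ) * (pdC j v y * (starRingEnd ℂ) (v y) + v y * (starRingEnd ℂ) (pdC j v y))) * v y
    + Pgp V ϑ v y * pdC j v y)

/-- auxiliary: second partial of `F2gp`. -/
noncomputable def Djgp {d : ℕ} (V : (Fin d → ℝ) → ℝ) (ϑ : ℝ) (v : (Fin d → ℝ) → ℂ)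
    (j : Fin d) (x : Fin d → ℝ) : ℂ :=
  -Complex.I * ((((pdR j (fun y => pdR j V y) x : ℝ) : ℂ)
      + (ϑ : ℂ) * (pdC j (fun y => pdC j v y) x * (starRingEnd ℂ) (v x)
          + 2 * (pdC j v x * (starRingEnd ℂ) (pdC j v x))
          + v x * (starRingEnd ℂ) (pdC j (fun y => pdC j v y) x))) * v x
    + 2 * (((pdR j V x : ℝ) : ℂ)
      + (ϑ : ℂ) * (pdC j v x * (starRingEnd ℂ) (v x) + v x * (starRingEnd ℂ) (pdC j v x)))
        * pdC j v x
    + Pgp V ϑ v x * pdC j (fun y => pdC j v y) x)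

lemma F2gp_eq : F2gp V ϑ v = fun y => -Complex.I * (Pgp V ϑ v y * v y) := by
  funext y
  simp only [F2gp, Pgp, ← Complex.mul_conj]
  ring

lemma contDiff_Pgp (hV : ContDiff ℝ 2 V) (hv : ContDiff ℝ 2 v) :
    ContDiff ℝ 2 (Pgp V ϑ v) :=
  (Complex.ofRealCLM.contDiff.comp hV).add
    (contDiff_const.mul (hv.mul (contDiff_conj hv)))

lemma contDiff_F2gp (hV : ContDiff ℝ 2 V) (hv : ContDiff ℝ 2 v) :
    ContDiff ℝ 2 (F2gp V ϑ v) := by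
  rw [F2gp_eq]
  exact contDiff_const.mul ((contDiff_Pgp hV hv).mul hv)

lemma pdC_Pgp (hV : ContDiff ℝ 2 V) (hv : ContDiff ℝ 2 v) (j : Fin d) (y : Fin d → ℝ) :
    pdC j (Pgp V ϑ v) y = ((pdR j V y : ℝ) : ℂ)
      + (ϑ : ℂ) * (pdC j v y * (starRingEnd ℂ) (v y) + v y * (starRingEnd ℂ) (pdC j v y)) := by
  have Dv : DifferentiableAt ℝ v y := (hv.differentiable (by norm_num)) y
  have Dcv : DifferentiableAt ℝ (fun z => (starRingEnd ℂ) (v z)) y :=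
    (diff_conj (hv.differentiable (by norm_num))) y
  have DVc : DifferentiableAt ℝ (fun z => ((V z : ℝ) : ℂ)) y :=
    (Complex.ofRealCLM.differentiable.comp (hV.differentiable (by norm_num))) y
  have Dq : DifferentiableAt ℝ (fun z => (ϑ : ℂ) * (v z * (starRingEnd ℂ) (v z))) y :=
    (differentiableAt_const _).mul (Dv.mul Dcv)
  unfold Pgp
  rw [pdC_add DVc Dq, pdC_const_mul (f := fun z => v z * (starRingEnd ℂ) (v z)) _ (Dv.mul Dcv), pdC_mul Dv Dcv, pdC_conj Dv,
    pdC_ofReal ((hV.differentiable (by norm_num)) y)]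

lemma pdC_F2gp' (hV : ContDiff ℝ 2 V) (hv : ContDiff ℝ 2 v) (j : Fin d) (y : Fin d → ℝ) :
    pdC j (F2gp V ϑ v) y
      = -Complex.I * (pdC j (Pgp V ϑ v) y * v y + Pgp V ϑ v y * pdC j v y) := by
  have Dv : DifferentiableAt ℝ v y := (hv.differentiable (by norm_num)) y
  have DP : DifferentiableAt ℝ (Pgp V ϑ v) y :=
    ((contDiff_Pgp hV hv).differentiable (by norm_num)) y
  rw [F2gp_eq, pdC_const_mul (f := fun y => Pgp V ϑ v y * v y) _ (DP.mul Dv), pdC_mul DP Dv]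

lemma pdC_F2gp (hV : ContDiff ℝ 2 V) (hv : ContDiff ℝ 2 v) (j : Fin d) (y : Fin d → ℝ) :
    pdC j (F2gp V ϑ v) y = Ejgp V ϑ v j y := by
  rw [pdC_F2gp' hV hv, pdC_Pgp hV hv, Ejgp]

lemma pdC2_F2gp (hV : ContDiff ℝ 2 V) (hv : ContDiff ℝ 2 v) (j : Fin d) (x : Fin d → ℝ) :
    pdC j (fun y => pdC j (F2gp V ϑ v) y) x = Djgp V ϑ v j x := by
  have Dv : DifferentiableAt ℝ v x := (hv.differentiable (by norm_num)) x
  have Dg : DifferentiableAt ℝ (fun y => pdC j v y) x := diff_pdC hv j x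
  have Dcv : DifferentiableAt ℝ (fun z => (starRingEnd ℂ) (v z)) x :=
    (diff_conj (hv.differentiable (by norm_num))) x
  have Dcg : DifferentiableAt ℝ (fun z => (starRingEnd ℂ) (pdC j v z)) x :=
    (diff_conj (diff_pdC hv j)) x
  have DW : DifferentiableAt ℝ (fun y => pdR j V y) x := diff_pdR hV j x
  have DP : DifferentiableAt ℝ (Pgp V ϑ v) x :=
    ((contDiff_Pgp hV hv).differentiable (by norm_num)) x
  have DpdP : DifferentiableAt ℝ (fun y => pdC j (Pgp V ϑ v) y) x :=
    diff_pdC (contDiff_Pgp hV hv) j x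
  have h1 : (fun y => pdC j (F2gp V ϑ v) y)
      = fun y => -Complex.I * (pdC j (Pgp V ϑ v) y * v y + Pgp V ϑ v y * pdC j v y) :=
    funext fun y => pdC_F2gp' hV hv j y
  rw [h1, pdC_const_mul (f := fun y => pdC j (Pgp V ϑ v) y * v y + Pgp V ϑ v y * pdC j v y) _
      ((DpdP.mul Dv).add (DP.mul Dg)),
    pdC_add (f := fun y => pdC j (Pgp V ϑ v) y * v y) (g := fun y => Pgp V ϑ v y * pdC j v y)
      (DpdP.mul Dv) (DP.mul Dg), pdC_mul DpdP Dv, pdC_mul DP Dg]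
  have h2 : (fun y => pdC j (Pgp V ϑ v) y)
      = fun y => ((pdR j V y : ℝ) : ℂ)
        + (ϑ : ℂ) * (pdC j v y * (starRingEnd ℂ) (v y) + v y * (starRingEnd ℂ) (pdC j v y)) :=
    funext fun y => pdC_Pgp hV hv j y
  have DWc : DifferentiableAt ℝ (fun y => ((pdR j V y : ℝ) : ℂ)) x :=
    (Complex.ofRealCLM.differentiable.comp (diff_pdR hV j)) x
  have Dq : DifferentiableAt ℝ
      (fun z => (ϑ : ℂ) * (pdC j v z * (starRingEnd ℂ) (v z)
        + v z * (starRingEnd ℂ) (pdC j v z))) x :=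
    (differentiableAt_const _).mul ((Dg.mul Dcv).add (Dv.mul Dcg))
  rw [h2, pdC_add DWc Dq, pdC_const_mul
      (f := fun z => pdC j v z * (starRingEnd ℂ) (v z) + v z * (starRingEnd ℂ) (pdC j v z)) _
      ((Dg.mul Dcv).add (Dv.mul Dcg)),
    pdC_add (f := fun z => pdC j v z * (starRingEnd ℂ) (v z))
      (g := fun z => v z * (starRingEnd ℂ) (pdC j v z)) (Dg.mul Dcv) (Dv.mul Dcg), pdC_mul Dg Dcv, pdC_mul Dv Dcg,
    pdC_conj Dv, pdC_conj Dg, pdC_ofReal (diff_pdR hV j x),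
    pdC_Pgp hV hv]
  simp only [Djgp, Pgp]
  ring

end gp

/-- **Iterated commutator identity for the Gross–Pitaevskii equation**:
`F₂′(v)G₁(v) − G₁′(v)F₂(v)
  = −2i (|∇V|² − 2ϑ(|v|²ΔV + ϑ(|v|²(2Re(v̄Δv) + 3∇v̄·∇v) + Re(v̄²∇v·∇v)))) v`
pointwise. -/
theorem iterated_commutator_gross_pitaevskii {d : ℕ} (hd : 1 ≤ d) (ϑ : ℝ)
    (V : (Fin d → ℝ) → ℝ) (hV : ContDiff ℝ 2 V)
    (v : (Fin d → ℝ) → ℂ) (hv : ContDiff ℝ 2 v) (x : Fin d → ℝ) :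
    F2gpD V ϑ v (G1gp V ϑ v) x - G1gpD V ϑ v (F2gp V ϑ v) x
    = - 2 * Complex.I * ((gdotR V V x : ℝ) - 2 * (ϑ : ℂ)
        * ((Complex.normSq (v x) : ℂ) * (lapR V x : ℂ)
          + (ϑ : ℂ) * ((Complex.normSq (v x) : ℂ)
              * (2 * (((starRingEnd ℂ) (v x) * lapC v x).re : ℂ)
                + 3 * gdotC (fun z => (starRingEnd ℂ) (v z)) v x)
            + ((((starRingEnd ℂ) (v x)) ^ 2 * gdotC v v x).re : ℂ)))) * v x := by
  have hv1 : Differentiable ℝ v := hv.differentiable (by norm_num)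
  have DF2 : Differentiable ℝ (F2gp V ϑ v) := (contDiff_F2gp hV hv).differentiable (by norm_num)
  have hre : ∀ z : ℂ, ((z.re : ℝ) : ℂ) = 2⁻¹ * z + 2⁻¹ * (starRingEnd ℂ) z := fun z => by
    rw [Complex.re_eq_add_conj]; ring
  have s1 : ∑ j, pdC j (fun z => ((V z : ℝ) : ℂ)) x * pdC j (F2gp V ϑ v) x
      = ∑ j, ((pdR j V x : ℝ) : ℂ) * Ejgp V ϑ v j x :=
    Finset.sum_congr rfl fun j _ => by
      rw [pdC_ofReal ((hV.differentiable (by norm_num)) x), pdC_F2gp hV hv]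
  have s2 : ∑ j, pdC j v x * pdC j (F2gp V ϑ v) x = ∑ j, pdC j v x * Ejgp V ϑ v j x :=
    Finset.sum_congr rfl fun j _ => by rw [pdC_F2gp hV hv]
  have s3 : ∑ j, pdC j (F2gp V ϑ v) x * pdC j (fun z => (starRingEnd ℂ) (v z)) x
      = ∑ j, Ejgp V ϑ v j x * (starRingEnd ℂ) (pdC j v x) :=
    Finset.sum_congr rfl fun j _ => by rw [pdC_F2gp hV hv, pdC_conj (hv1 x)]
  have s4 : ∑ j, pdC j v x * pdC j (fun z => (starRingEnd ℂ) (F2gp V ϑ v z)) x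
      = ∑ j, pdC j v x * (starRingEnd ℂ) (Ejgp V ϑ v j x) :=
    Finset.sum_congr rfl fun j _ => by rw [pdC_conj (DF2 x), pdC_F2gp hV hv]
  have s5 : ∑ j, pdC j (fun y => pdC j (fun z => (starRingEnd ℂ) (F2gp V ϑ v z)) y) x
      = ∑ j, (starRingEnd ℂ) (Djgp V ϑ v j x) :=
    Finset.sum_congr rfl fun j _ => by
      rw [show (fun y => pdC j (fun z => (starRingEnd ℂ) (F2gp V ϑ v z)) y)
          = fun y => (starRingEnd ℂ) (pdC j (F2gp V ϑ v) y) from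
            funext fun y => pdC_conj (DF2 y),
        pdC_conj (diff_pdC (contDiff_F2gp hV hv) j x), pdC2_F2gp hV hv]
  have s6 : ∑ j, pdC j (fun y => pdC j (fun z => (starRingEnd ℂ) (v z)) y) x
      = ∑ j, (starRingEnd ℂ) (pdC j (fun y => pdC j v y) x) :=
    Finset.sum_congr rfl fun j _ => by
      rw [show (fun y => pdC j (fun z => (starRingEnd ℂ) (v z)) y)
          = fun y => (starRingEnd ℂ) (pdC j v y) from funext fun y => pdC_conj (hv1 y),
        pdC_conj (diff_pdC hv j x)]
  have s7 : ∑ j, pdC j (fun z => ((V z : ℝ) : ℂ)) x * pdC j v x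
      = ∑ j, ((pdR j V x : ℝ) : ℂ) * pdC j v x :=
    Finset.sum_congr rfl fun j _ => by rw [pdC_ofReal ((hV.differentiable (by norm_num)) x)]
  have s8 : ∑ j, pdC j v x * pdC j (fun z => (starRingEnd ℂ) (v z)) x
      = ∑ j, pdC j v x * (starRingEnd ℂ) (pdC j v x) :=
    Finset.sum_congr rfl fun j _ => by rw [pdC_conj (hv1 x)]
  have s9 : ∑ j, pdC j (fun z => (starRingEnd ℂ) (v z)) x * pdC j v x
      = ∑ j, (starRingEnd ℂ) (pdC j v x) * pdC j v x :=
    Finset.sum_congr rfl fun j _ => by rw [pdC_conj (hv1 x)]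
  have hF2x : F2gp V ϑ v x = -Complex.I * (Pgp V ϑ v x * v x) := congrFun F2gp_eq x
  simp only [F2gpD, G1gpD, G1gp, gdotC, lapC, lapR, gdotR]
  rw [s1, s2, s3, s4, s5, s6, s7, s8, s9, hF2x]
  simp only [hre, ← Complex.mul_conj]
  simp only [Ejgp, Djgp, Pgp]
  simp only [Complex.ofReal_sum, Complex.ofReal_mul, map_sum, map_add, map_sub, map_mul,
    map_neg, map_pow, map_ofNat, map_one, Complex.conj_conj, Complex.conj_ofReal,
    Complex.conj_I]
  simp only [mul_add, add_mul, mul_sub, sub_mul, neg_mul, mul_neg, neg_add, neg_sub, neg_neg,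
    Finset.mul_sum, Finset.sum_mul]
  simp only [← Finset.sum_add_distrib, ← Finset.sum_sub_distrib, ← Finset.sum_neg_distrib]
  refine Finset.sum_congr rfl fun j _ => ?_
  ring
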